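/- Let a < 0 be a real number, let μ be a finite measure on [0,∞), and let p : [0,∞) → [0,∞) be measurable with ∫_0^∞ p(t) dt < ∞ and satisfying p(t) = e^{a t} + ∫_{[0,t]} p(t−u) dμ(u) for all t ≥ 0. Then μ([0,∞)) = 1 + 1/(a · ∫_0^∞ p(t) dt), and 0 ≤ μ([0,∞)) < 1. -/

import Mathlib

open MeasureTheory Filter Topology

/-- Translation lemma: shifting the lower integration limit. -/
lemma shift_lintegral (g : ℝ → ENNReal) (hg : Measurable g) (u : ℝ) :
    ∫⁻ t in Set.Ici u, g (t - u) = ∫⁻ s in Set.Ici (0 : ℝ), g s := by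
  have h : MeasurePreserving (· - u) (volume : Measure ℝ) volume :=
    measurePreserving_sub_right volume u
  have hmap : Measure.map (· - u) (volume.restrict (Set.Ici u)) =
      volume.restrict (Set.Ici (0 : ℝ)) := by
    have hpre : (· - u) ⁻¹' (Set.Ici (0 : ℝ)) = Set.Ici u := by
      ext x; simp [sub_nonneg]
    rw [← hpre, ← Measure.restrict_map h.measurable measurableSet_Ici, h.map_eq]
  rw [← hmap, lintegral_map hg (measurable_sub_const u)]

/-- Let `a < 0`, let `μ` be a finite measure supported on `[0,∞)`,
and let `p : [0,∞) → [0,∞)` be measurable, integrable on `[0,∞)`, satisfying the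
renewal-type equation `p(t) = e^{at} + ∫_{[0,t]} p(t-u) dμ(u)` for `t ≥ 0`.
Then `μ([0,∞)) = 1 + 1/(a · ∫_0^∞ p(t) dt)` and `0 ≤ μ([0,∞)) < 1`. -/
theorem total_mass_of_return_time_equation
    (a : ℝ) (ha : a < 0)
    (μ : Measure ℝ) [IsFiniteMeasure μ] (hsupp : μ (Set.Iio 0) = 0)
    (p : ℝ → ℝ) (hp0 : ∀ t, 0 ≤ p t) (hpm : Measurable p)
    (hpint : IntegrableOn p (Set.Ici (0 : ℝ)))
    (hp : ∀ t : ℝ, 0 ≤ t →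
      p t = Real.exp (a * t) + ∫ u in Set.Icc (0 : ℝ) t, p (t - u) ∂μ) :
    (μ (Set.Ici 0)).toReal = 1 + 1 / (a * ∫ t in Set.Ici (0 : ℝ), p t) ∧
      0 ≤ (μ (Set.Ici 0)).toReal ∧ (μ (Set.Ici 0)).toReal < 1 := by
  classical
  set g : ℝ → ENNReal := fun s => ENNReal.ofReal (p s) with hg_def
  have hg : Measurable g := ENNReal.measurable_ofReal.comp hpm
  set Pr : ℝ := ∫ t in Set.Ici (0 : ℝ), p t with hPr_def
  have hPr0 : 0 ≤ Pr := setIntegral_nonneg measurableSet_Ici fun t _ => hp0 t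
  set ν : Measure ℝ := volume.restrict (Set.Ici (0 : ℝ)) with hν_def
  set P' : ENNReal := ∫⁻ t, g t ∂ν with hP'_def
  have hP'eq : P' = ENNReal.ofReal Pr := by
    rw [hP'_def, hPr_def, ← ofReal_integral_eq_lintegral_ofReal hpint
      (Filter.Eventually.of_forall fun t => hp0 t)]
  have hP'fin : P' ≠ ⊤ := by rw [hP'eq]; exact ENNReal.ofReal_ne_top
  -- the measurable product function
  set S : Set (ℝ × ℝ) := {q : ℝ × ℝ | 0 ≤ q.2 ∧ q.2 ≤ q.1} with hS_def
  have hSm : MeasurableSet S :=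
    (measurableSet_le measurable_const measurable_snd).inter
      (measurableSet_le measurable_snd measurable_fst)
  set G : ℝ × ℝ → ENNReal := S.indicator (fun q => g (q.1 - q.2)) with hG_def
  have hGm : Measurable G :=
    (hg.comp (measurable_fst.sub measurable_snd)).indicator hSm
  have hGpt : ∀ t u : ℝ, G (t, u) = (Set.Icc 0 t).indicator (fun u => g (t - u)) u := by
    intro t u
    by_cases h : u ∈ Set.Icc (0 : ℝ) t
    · rw [Set.indicator_of_mem h]
      have : (t, u) ∈ S := ⟨h.1, h.2⟩
      rw [hG_def, Set.indicator_of_mem this]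
    · rw [Set.indicator_of_notMem h]
      have : (t, u) ∉ S := fun hc => h ⟨hc.1, hc.2⟩
      rw [hG_def, Set.indicator_of_notMem this]
  have hIeq : ∀ t : ℝ, (∫⁻ u, G (t, u) ∂μ) = ∫⁻ u in Set.Icc (0 : ℝ) t, g (t - u) ∂μ := by
    intro t
    rw [← lintegral_indicator measurableSet_Icc]
    exact lintegral_congr fun u => hGpt t u
  -- a.e. u is nonneg
  have hae_u : ∀ᵐ u ∂μ, 0 ≤ u := by
    rw [ae_iff]
    have : {u : ℝ | ¬ 0 ≤ u} = Set.Iio 0 := by ext u; simp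
    rw [this]; exact hsupp
  -- Tonelli / swap
  have key : ∫⁻ t, (∫⁻ u, G (t, u) ∂μ) ∂ν = μ Set.univ * P' := by
    have hswap := lintegral_lintegral_swap (μ := ν) (ν := μ)
      (f := fun t u => G (t, u)) hGm.aemeasurable
    rw [hswap]
    have hinner : ∀ᵐ u ∂μ, (∫⁻ t, G (t, u) ∂ν) = P' := by
      filter_upwards [hae_u] with u hu
      have h1 : ∀ t : ℝ, G (t, u) = (Set.Ici u).indicator (fun t => g (t - u)) t := by
        intro t
        simp only [hG_def, hS_def, Set.indicator_apply, Set.mem_Ici, Set.mem_setOf_eq]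
        by_cases h : u ≤ t <;> simp [h, hu]
      calc ∫⁻ t, G (t, u) ∂ν = ∫⁻ t, (Set.Ici u).indicator (fun t => g (t - u)) t ∂ν := by
            exact lintegral_congr fun t => h1 t
        _ = ∫⁻ t in Set.Ici u, g (t - u) ∂ν := lintegral_indicator measurableSet_Ici _
        _ = ∫⁻ t in Set.Ici u, g (t - u) := by
            rw [hν_def, Measure.restrict_restrict measurableSet_Ici,
              Set.inter_eq_self_of_subset_left (Set.Ici_subset_Ici.mpr hu)]
        _ = P' := shift_lintegral g hg u
    rw [lintegral_congr_ae hinner, lintegral_const, mul_comm]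
  have hμfin : μ Set.univ ≠ ⊤ := measure_ne_top μ _
  have hkeyfin : (∫⁻ t, (∫⁻ u, G (t, u) ∂μ) ∂ν) ≠ ⊤ := by
    rw [key]; exact ENNReal.mul_ne_top hμfin hP'fin
  -- a.e. t: inner lintegral finite
  have hImeas : Measurable fun t => ∫⁻ u, G (t, u) ∂μ :=
    Measurable.lintegral_prod_right' hGm
  have hae_fin : ∀ᵐ t ∂ν, (∫⁻ u, G (t, u) ∂μ) < ⊤ := ae_lt_top hImeas hkeyfin
  -- a.e. t ≥ 0 w.r.t. ν
  have hae_t : ∀ᵐ t ∂ν, 0 ≤ t := ae_restrict_of_forall_mem measurableSet_Ici fun t ht => ht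
  -- the key pointwise a.e. identity
  have hptwise : ∀ᵐ t ∂ν, g t = ENNReal.ofReal (Real.exp (a * t)) + ∫⁻ u, G (t, u) ∂μ := by
    filter_upwards [hae_fin, hae_t] with t hfin ht
    have hfin' : (∫⁻ u in Set.Icc (0 : ℝ) t, g (t - u) ∂μ) < ⊤ := by rw [← hIeq]; exact hfin
    have hmeas' : Measurable fun u : ℝ => p (t - u) :=
      hpm.comp (measurable_const.sub measurable_id)
    have hint : Integrable (fun u : ℝ => p (t - u)) (μ.restrict (Set.Icc 0 t)) := by
      refine ⟨hmeas'.aestronglyMeasurable, ?_⟩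
      rw [hasFiniteIntegral_iff_norm]
      have : ∀ u : ℝ, ENNReal.ofReal ‖p (t - u)‖ = g (t - u) := by
        intro u; rw [Real.norm_of_nonneg (hp0 _)]
      simpa only [this] using hfin'
    have hB : ENNReal.ofReal (∫ u in Set.Icc (0 : ℝ) t, p (t - u) ∂μ)
        = ∫⁻ u in Set.Icc (0 : ℝ) t, g (t - u) ∂μ :=
      ofReal_integral_eq_lintegral_ofReal hint
        (Filter.Eventually.of_forall fun u => hp0 _)
    have hBnn : 0 ≤ ∫ u in Set.Icc (0 : ℝ) t, p (t - u) ∂μ :=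
      integral_nonneg fun u => hp0 _
    rw [hg_def]
    simp only [hp t ht]
    rw [ENNReal.ofReal_add (Real.exp_pos _).le hBnn, hB, hIeq]
  -- integrate
  have hane : a ≠ 0 := ne_of_lt ha
  have hpos : (0 : ℝ) < -1 / a := div_pos_iff.mpr (Or.inr ⟨by norm_num, ha⟩)
  have hexp_int : IntegrableOn (fun t : ℝ => Real.exp (a * t)) (Set.Ici (0 : ℝ)) := by
    rw [integrableOn_Ici_iff_integrableOn_Ioi]
    simpa [neg_mul, neg_neg] using exp_neg_integrableOn_Ioi 0 (neg_pos.mpr ha)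
  have hexp_val : (∫ t in Set.Ici (0 : ℝ), Real.exp (a * t)) = -1 / a := by
    rw [MeasureTheory.integral_Ici_eq_integral_Ioi]
    have hb : (0 : ℝ) < -a := neg_pos.mpr ha
    have h2 := integral_comp_mul_left_Ioi (fun x : ℝ => Real.exp (-x)) 0 hb
    simp only [mul_zero, smul_eq_mul, neg_mul, neg_neg] at h2
    rw [h2, integral_exp_neg_Ioi_zero]
    field_simp
  have hE : (∫⁻ t, ENNReal.ofReal (Real.exp (a * t)) ∂ν) = ENNReal.ofReal (-1 / a) := by
    rw [hν_def, ← ofReal_integral_eq_lintegral_ofReal hexp_int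
      (Filter.Eventually.of_forall fun t => (Real.exp_pos _).le), hexp_val]
  have hexpm : Measurable fun t : ℝ => ENNReal.ofReal (Real.exp (a * t)) :=
    ((measurable_const_mul a).exp).ennreal_ofReal
  have hmain : P' = ENNReal.ofReal (-1 / a) + μ Set.univ * P' := by
    have hcongr : (∫⁻ t, g t ∂ν)
        = ∫⁻ t, (ENNReal.ofReal (Real.exp (a * t)) + ∫⁻ u, G (t, u) ∂μ) ∂ν :=
      lintegral_congr_ae hptwise
    calc P' = ∫⁻ t, (ENNReal.ofReal (Real.exp (a * t)) + ∫⁻ u, G (t, u) ∂μ) ∂ν := hcongr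
      _ = (∫⁻ t, ENNReal.ofReal (Real.exp (a * t)) ∂ν) + ∫⁻ t, (∫⁻ u, G (t, u) ∂μ) ∂ν :=
          lintegral_add_left hexpm _
      _ = ENNReal.ofReal (-1 / a) + μ Set.univ * P' := by rw [hE, key]
  -- convert to real numbers
  set m : ℝ := (μ Set.univ).toReal with hm_def
  have hm0 : 0 ≤ m := ENNReal.toReal_nonneg
  have hreal : Pr = -1 / a + m * Pr := by
    have h1 : μ Set.univ = ENNReal.ofReal m := (ENNReal.ofReal_toReal hμfin).symm
    have h2 : ENNReal.ofReal Pr = ENNReal.ofReal (-1 / a + m * Pr) := by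
      rw [ENNReal.ofReal_add hpos.le (mul_nonneg hm0 hPr0), ← hP'eq, hmain, h1, hP'eq,
        ← ENNReal.ofReal_mul hm0]
    exact (ENNReal.ofReal_eq_ofReal_iff hPr0
      (add_nonneg hpos.le (mul_nonneg hm0 hPr0))).mp h2
  have hPrpos : 0 < Pr := by nlinarith [mul_nonneg hm0 hPr0]
  have hPrne : Pr ≠ 0 := ne_of_gt hPrpos
  have haPr : a * Pr < 0 := mul_neg_of_neg_of_pos ha hPrpos
  rw [neg_div] at hreal hpos
  have hmPr : m * Pr = Pr + 1 / a := by linarith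
  have hm_val : m = 1 + 1 / (a * Pr) := by
    calc m = m * Pr / Pr := by field_simp
      _ = (Pr + 1 / a) / Pr := by rw [hmPr]
      _ = 1 + 1 / (a * Pr) := by field_simp
  have hμIci : μ (Set.Ici (0:ℝ)) = μ Set.univ := by
    have h3 := measure_add_measure_compl (μ := μ) (measurableSet_Ici (a := (0:ℝ)))
    rw [Set.compl_Ici, hsupp, add_zero] at h3
    exact h3
  refine ⟨?_, ?_, ?_⟩
  · rw [hμIci, ← hm_def]; exact hm_val
  · rw [hμIci, ← hm_def]; exact hm0
  · rw [hμIci, ← hm_def, hm_val]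
    have : 1 / (a * Pr) < 0 := div_neg_of_pos_of_neg one_pos haPr
    linarith
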